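/- Let T be a matrix-valued function, analytic in a neighborhood of 0 in ℂ with values in the d×d complex matrices, such that T(0) is real, symmetric (T(0)ᵀ = T(0)) and orthogonal (T(0)ᵀ T(0) = I). Let P := (1/2)(I − T(0)). Fix μ ∈ ℂ with μ ≠ 0 and a choice of square root √μ. Then there exist ε₀ > 0, C > 0, and matrix-valued functions A₁, A₂, B₁, B₂ on (0, ε₀] with operator norms ‖A₁(ε)‖, ‖A₂(ε)‖, ‖B₁(ε)‖, ‖B₂(ε)‖ ≤ C·ε, such that for every ε ∈ (0, ε₀] and all a, b ∈ ℂ^d the following are equivalent: (i) i·(I + T(ε√μ))·b − √μ·(I − T(ε√μ))·a = 0; (ii) P·a = A₁(ε)·a + A₂(ε)·b and (I − P)·b = B₁(ε)·a + B₂(ε)·b. -/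

import Mathlib

open Matrix

noncomputable def matCLM (d : ℕ) (M : Matrix (Fin d) (Fin d) ℂ) : (Fin d → ℂ) →L[ℂ] (Fin d → ℂ) :=
  LinearMap.toContinuousLinearMap M.mulVecLin

@[simp] lemma matCLM_apply (d : ℕ) (M : Matrix (Fin d) (Fin d) ℂ) (x : Fin d → ℂ) :
    matCLM d M x = M *ᵥ x := rfl

lemma norm_matCLM_le (d : ℕ) (M : Matrix (Fin d) (Fin d) ℂ) (c : ℝ) (hc : 0 ≤ c)
    (h : ∀ i j, ‖M i j‖ ≤ c) : ‖matCLM d M‖ ≤ d * c := by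
  apply ContinuousLinearMap.opNorm_le_bound _ (by positivity)
  intro x
  rw [matCLM_apply]
  apply pi_norm_le_iff_of_nonneg (by positivity) |>.2
  intro i
  calc ‖(M *ᵥ x) i‖ = ‖∑ j, M i j * x j‖ := by rw [Matrix.mulVec, dotProduct]
    _ ≤ ∑ j, ‖M i j * x j‖ := norm_sum_le _ _
    _ ≤ ∑ j : Fin d, c * ‖x‖ := by
        apply Finset.sum_le_sum
        intro j _
        rw [norm_mul]
        exact mul_le_mul (h i j) (norm_le_pi_norm x j) (norm_nonneg _) hc
    _ = d * c * ‖x‖ := by simp [Finset.sum_const]; ring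

lemma gluingE_def (d : ℕ) (T₀ R : Matrix (Fin d) (Fin d) ℂ) (hT0sq : T₀ * T₀ = 1)
    (sqμ : ℂ) (hs : sqμ ≠ 0) (a b : Fin d → ℂ) :
    ((2⁻¹:ℂ) • (1 - T₀)) *ᵥ a
        - ((2⁻¹:ℂ) • (((2⁻¹:ℂ) • (1 - T₀)) *ᵥ (R *ᵥ a))
          + (Complex.I/(2*sqμ)) • (((2⁻¹:ℂ) • (1 - T₀)) *ᵥ (R *ᵥ b)))
      = (-(2*sqμ)⁻¹) • (((2⁻¹:ℂ) • (1 - T₀)) *ᵥ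
          (Complex.I • ((1 + (T₀ + R)) *ᵥ b) - sqμ • ((1 - (T₀ + R)) *ᵥ a))) := by
  have key : ∀ x : Fin d → ℂ, T₀ *ᵥ (T₀ *ᵥ x) = x := fun x => by
    rw [Matrix.mulVec_mulVec, hT0sq, Matrix.one_mulVec]
  simp only [Matrix.add_mulVec, Matrix.sub_mulVec, Matrix.smul_mulVec, Matrix.one_mulVec,
    Matrix.mulVec_add, Matrix.mulVec_sub, Matrix.mulVec_smul, key, smul_add, smul_sub]
  match_scalars <;> field_simp <;> first | ring1 | linear_combination (sqμ*16)*Complex.I_sq | linear_combination (sqμ*8)*Complex.I_sq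

lemma gluingF_def (d : ℕ) (T₀ R : Matrix (Fin d) (Fin d) ℂ) (hT0sq : T₀ * T₀ = 1)
    (sqμ : ℂ) (hs : sqμ ≠ 0) (a b : Fin d → ℂ) :
    (1 - (2⁻¹:ℂ) • (1 - T₀)) *ᵥ b
        - ((Complex.I * sqμ / 2) • ((1 - (2⁻¹:ℂ) • (1 - T₀)) *ᵥ (R *ᵥ a))
          + ((-(2⁻¹):ℂ)) • ((1 - (2⁻¹:ℂ) • (1 - T₀)) *ᵥ (R *ᵥ b)))
      = (-(Complex.I)/2) • ((1 - (2⁻¹:ℂ) • (1 - T₀)) *ᵥ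
          (Complex.I • ((1 + (T₀ + R)) *ᵥ b) - sqμ • ((1 - (T₀ + R)) *ᵥ a))) := by
  have key : ∀ x : Fin d → ℂ, T₀ *ᵥ (T₀ *ᵥ x) = x := fun x => by
    rw [Matrix.mulVec_mulVec, hT0sq, Matrix.one_mulVec]
  simp only [Matrix.add_mulVec, Matrix.sub_mulVec, Matrix.smul_mulVec, Matrix.one_mulVec,
    Matrix.mulVec_add, Matrix.mulVec_sub, Matrix.mulVec_smul, key, smul_add, smul_sub]
  match_scalars <;> field_simp <;> first | ring1 | linear_combination (sqμ*16)*Complex.I_sq | linear_combination (sqμ*8)*Complex.I_sq | (ring_nf; simp only [Complex.I_sq] <;> ring)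

lemma gluingG_def (d : ℕ) (T₀ R : Matrix (Fin d) (Fin d) ℂ) (hT0sq : T₀ * T₀ = 1)
    (sqμ : ℂ) (hs : sqμ ≠ 0) (a b : Fin d → ℂ) :
    Complex.I • ((1 + (T₀ + R)) *ᵥ b) - sqμ • ((1 - (T₀ + R)) *ᵥ a)
      = (-(2*sqμ)) • (((2⁻¹:ℂ) • (1 - T₀)) *ᵥ a
          - ((2⁻¹:ℂ) • (((2⁻¹:ℂ) • (1 - T₀)) *ᵥ (R *ᵥ a))
            + (Complex.I/(2*sqμ)) • (((2⁻¹:ℂ) • (1 - T₀)) *ᵥ (R *ᵥ b))))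
        + (2*Complex.I) • ((1 - (2⁻¹:ℂ) • (1 - T₀)) *ᵥ b
          - ((Complex.I * sqμ / 2) • ((1 - (2⁻¹:ℂ) • (1 - T₀)) *ᵥ (R *ᵥ a))
            + ((-(2⁻¹):ℂ)) • ((1 - (2⁻¹:ℂ) • (1 - T₀)) *ᵥ (R *ᵥ b)))) := by
  have key : ∀ x : Fin d → ℂ, T₀ *ᵥ (T₀ *ᵥ x) = x := fun x => by
    rw [Matrix.mulVec_mulVec, hT0sq, Matrix.one_mulVec]
  simp only [Matrix.add_mulVec, Matrix.sub_mulVec, Matrix.smul_mulVec, Matrix.one_mulVec,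
    Matrix.mulVec_add, Matrix.mulVec_sub, Matrix.mulVec_smul, key, smul_add, smul_sub]
  match_scalars <;> field_simp <;> first | ring1 | linear_combination (sqμ*16)*Complex.I_sq | linear_combination (sqμ*8)*Complex.I_sq | (ring_nf; simp only [Complex.I_sq] <;> ring)

/-- matrix content of Lemma gcl0: if `T(z)` is analytic near `0` with
`T(0)` real, symmetric and orthogonal and `P = (1/2)(I - T(0))`, then for fixed `μ ≠ 0`
with square root `√μ`, there are `ε₀ > 0`, `C > 0` and operator families
`A₁, A₂, B₁, B₂` of norm `≤ Cε`, such that for all `ε ∈ (0, ε₀]` and all `a, b ∈ ℂ^d`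
the gluing condition `i(I + T(ε√μ))b - √μ(I - T(ε√μ))a = 0` is equivalent to
`P a = A₁(ε) a + A₂(ε) b` and `(I - P) b = B₁(ε) a + B₂(ε) b`. -/
theorem gluing_condition_near_threshold
    (d : ℕ) (T : ℂ → Matrix (Fin d) (Fin d) ℂ)
    (hT : ∀ i j : Fin d, AnalyticAt ℂ (fun z => T z i j) 0)
    (hreal : ∀ i j : Fin d, (T 0 i j).im = 0)
    (hsym : (T 0)ᵀ = T 0) (horth : (T 0)ᵀ * T 0 = 1)
    (μ sqμ : ℂ) (hμ : μ ≠ 0) (hsqμ : sqμ ^ 2 = μ) :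
    let P : Matrix (Fin d) (Fin d) ℂ := (2⁻¹ : ℂ) • (1 - T 0)
    ∃ (ε₀ C : ℝ), 0 < ε₀ ∧ 0 < C ∧
      ∃ A₁ A₂ B₁ B₂ : ℝ → ((Fin d → ℂ) →L[ℂ] (Fin d → ℂ)),
        (∀ ε ∈ Set.Ioc (0 : ℝ) ε₀,
          ‖A₁ ε‖ ≤ C * ε ∧ ‖A₂ ε‖ ≤ C * ε ∧ ‖B₁ ε‖ ≤ C * ε ∧ ‖B₂ ε‖ ≤ C * ε) ∧
        ∀ ε ∈ Set.Ioc (0 : ℝ) ε₀, ∀ a b : Fin d → ℂ,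
          (Complex.I • ((1 + T ((ε : ℂ) * sqμ)) *ᵥ b)
              - sqμ • ((1 - T ((ε : ℂ) * sqμ)) *ᵥ a) = 0
            ↔ (P *ᵥ a = A₁ ε a + A₂ ε b ∧ (1 - P) *ᵥ b = B₁ ε a + B₂ ε b)) := by
  intro P
  have hP : P = (2⁻¹ : ℂ) • (1 - T 0) := rfl
  have hs : sqμ ≠ 0 := by
    intro h; apply hμ; rw [← hsqμ, h]; ring
  have hT0sq : T 0 * T 0 = 1 := by nth_rewrite 1 [← hsym]; exact horth
  -- entrywise Lipschitz-type bound near 0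
  have hb : ∀ p : Fin d × Fin d, ∃ c : ℝ,
      ∀ᶠ z in nhds (0:ℂ), ‖T z p.1 p.2 - T 0 p.1 p.2‖ ≤ c * ‖z‖ := by
    intro p
    obtain ⟨c, hc⟩ := ((hT p.1 p.2).differentiableAt.isBigO_sub).bound
    exact ⟨c, by simpa using hc⟩
  choose c hc using hb
  set K : ℝ := (∑ p : Fin d × Fin d, |c p|) + 1 with hK
  have hK0 : 0 < K := by positivity
  have hcK : ∀ p, c p ≤ K := by
    intro p
    have h1 : |c p| ≤ ∑ q : Fin d × Fin d, |c q| :=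
      Finset.single_le_sum (fun q _ => abs_nonneg (c q)) (Finset.mem_univ p)
    calc c p ≤ |c p| := le_abs_self _
      _ ≤ K := by rw [hK]; linarith
  have hev : ∀ᶠ z in nhds (0:ℂ), ∀ p : Fin d × Fin d,
      ‖T z p.1 p.2 - T 0 p.1 p.2‖ ≤ K * ‖z‖ := by
    rw [Filter.eventually_all]
    intro p
    filter_upwards [hc p] with z hz
    exact hz.trans (mul_le_mul_of_nonneg_right (hcK p) (norm_nonneg z))
  obtain ⟨δ, hδ, hball⟩ := Metric.eventually_nhds_iff.1 hev
  set ε₀ : ℝ := δ / (‖sqμ‖ + 1) with hε₀def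
  have hε₀ : 0 < ε₀ := by positivity
  -- the remainder matrix
  set R : ℝ → Matrix (Fin d) (Fin d) ℂ := fun ε => T ((ε : ℂ) * sqμ) - T 0 with hRdef
  set D : ℝ := d * (K * ‖sqμ‖) with hD
  have hD0 : 0 ≤ D := by positivity
  have hRb : ∀ ε ∈ Set.Ioc (0:ℝ) ε₀, ‖matCLM d (R ε)‖ ≤ D * ε := by
    rintro ε ⟨hε1, hε2⟩
    have hz : ‖((ε : ℝ) : ℂ) * sqμ‖ = ε * ‖sqμ‖ := by
      rw [norm_mul, Complex.norm_real, Real.norm_eq_abs, abs_of_pos hε1]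
    have hzδ : dist (((ε : ℝ) : ℂ) * sqμ) 0 < δ := by
      rw [dist_zero_right, hz]
      have h1 : ε * ‖sqμ‖ ≤ ε₀ * ‖sqμ‖ := mul_le_mul_of_nonneg_right hε2 (norm_nonneg _)
      have h2 : ε₀ * (‖sqμ‖ + 1) = δ := by rw [hε₀def]; field_simp
      nlinarith
    have hent : ∀ i j, ‖R ε i j‖ ≤ K * ‖sqμ‖ * ε := by
      intro i j
      have h := hball hzδ (i, j)
      rw [hz] at h
      have hre : R ε i j = T ((ε : ℂ) * sqμ) i j - T 0 i j := rfl
      calc ‖R ε i j‖ = ‖T ((ε : ℂ) * sqμ) i j - T 0 i j‖ := by rw [hre]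
        _ ≤ K * (ε * ‖sqμ‖) := h
        _ = K * ‖sqμ‖ * ε := by ring
    have hle := norm_matCLM_le d (R ε) (K * ‖sqμ‖ * ε) (by positivity) hent
    calc ‖matCLM d (R ε)‖ ≤ d * (K * ‖sqμ‖ * ε) := hle
      _ = D * ε := by rw [hD]; ring
  set N : ℝ := max ‖matCLM d P‖ ‖matCLM d (1 - P)‖ with hN
  have hN0 : 0 ≤ N := le_trans (norm_nonneg _) (le_max_left _ _)
  set M : ℝ := max (max ‖(2⁻¹ : ℂ)‖ ‖Complex.I / (2 * sqμ)‖)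
      (max ‖Complex.I * sqμ / 2‖ ‖(-(2⁻¹) : ℂ)‖) with hM
  have hM0 : 0 ≤ M := le_trans (norm_nonneg _) ((le_max_left _ _).trans (le_max_left _ _))
  set C : ℝ := M * N * D + 1 with hC
  have hC0 : 0 < C := by positivity
  refine ⟨ε₀, C, hε₀, hC0,
    fun ε => ((2⁻¹ : ℂ) • ((matCLM d P).comp (matCLM d (R ε)))),
    fun ε => ((Complex.I / (2 * sqμ)) • ((matCLM d P).comp (matCLM d (R ε)))),
    fun ε => ((Complex.I * sqμ / 2) • ((matCLM d (1 - P)).comp (matCLM d (R ε)))),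
    fun ε => ((-(2⁻¹) : ℂ) • ((matCLM d (1 - P)).comp (matCLM d (R ε)))), ?_, ?_⟩
  · -- norm bounds
    have main : ∀ (s : ℂ) (F : (Fin d → ℂ) →L[ℂ] (Fin d → ℂ)), ‖s‖ ≤ M → ‖F‖ ≤ N →
        ∀ ε ∈ Set.Ioc (0:ℝ) ε₀, ‖s • (F.comp (matCLM d (R ε)))‖ ≤ C * ε := by
      intro s F hsM hFN ε hε
      have h1 : ‖s • (F.comp (matCLM d (R ε)))‖ ≤ ‖s‖ * (‖F‖ * ‖matCLM d (R ε)‖) :=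
        (ContinuousLinearMap.opNorm_smul_le s _).trans
          (mul_le_mul_of_nonneg_left (ContinuousLinearMap.opNorm_comp_le _ _) (norm_nonneg s))
      have h2 : ‖s‖ * (‖F‖ * ‖matCLM d (R ε)‖) ≤ M * (N * (D * ε)) := by
        apply mul_le_mul hsM _ (by positivity) hM0
        apply mul_le_mul hFN (hRb ε hε) (norm_nonneg _) hN0
      have h3 : M * (N * (D * ε)) ≤ C * ε := by
        rw [hC]
        nlinarith [hε.1.le, mul_nonneg hM0 hN0, mul_nonneg (mul_nonneg hM0 hN0) hD0]
      linarith
    intro ε hε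
    exact ⟨main _ _ ((le_max_left _ _).trans (le_max_left _ _)) (le_max_left _ _) ε hε,
      main _ _ ((le_max_right _ _).trans (le_max_left _ _)) (le_max_left _ _) ε hε,
      main _ _ ((le_max_left _ _).trans (le_max_right _ _)) (le_max_right _ _) ε hε,
      main _ _ ((le_max_right _ _).trans (le_max_right _ _)) (le_max_right _ _) ε hε⟩
  · -- the equivalence
    intro ε hε a b
    have hTsplit : T ((ε : ℂ) * sqμ) = T 0 + R ε := by
      show T ((ε : ℂ) * sqμ) = T 0 + (T ((ε : ℂ) * sqμ) - T 0)
      abel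
    have e1 := gluingE_def d (T 0) (R ε) hT0sq sqμ hs a b
    have e2 := gluingF_def d (T 0) (R ε) hT0sq sqμ hs a b
    have e3 := gluingG_def d (T 0) (R ε) hT0sq sqμ hs a b
    rw [← hTsplit, ← hP] at e1 e2 e3
    simp only [ContinuousLinearMap.smul_apply, ContinuousLinearMap.coe_comp',
      Function.comp_apply, matCLM_apply]
    constructor
    · intro h0
      rw [h0, Matrix.mulVec_zero, smul_zero] at e1 e2
      exact ⟨sub_eq_zero.1 e1, sub_eq_zero.1 e2⟩
    · rintro ⟨h1, h2⟩
      rw [e3, sub_eq_zero_of_eq h1, sub_eq_zero_of_eq h2, smul_zero, smul_zero, add_zero]
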